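/- Let A₁, …, A_m ∈ ℝ^{n×n} be positive semidefinite and p₁, …, p_m > 0 with p₁ + ⋯ + p_m = 1. If Â is positive semidefinite and minimizes B ↦ ∑ᵢ pᵢ·W₂²(Aᵢ, B) over all positive semidefinite matrices B, then range(Aᵢ) ∩ ker(Â) = {0} for every i = 1, …, m; in particular rank(Â) ≥ maxᵢ rank(Aᵢ). -/

import Mathlib

set_option maxHeartbeats 1000000

open Matrix

/-- The positive semidefinite square root of a psd matrix (junk value `0` otherwise). -/
noncomputable def psdSqrt {n : ℕ} (M : Matrix (Fin n) (Fin n) ℝ) : Matrix (Fin n) (Fin n) ℝ :=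
  letI := Classical.propDecidable M.PosSemidef
  if h : M.PosSemidef then
    (h.1.eigenvectorUnitary : Matrix (Fin n) (Fin n) ℝ) * diagonal (Real.sqrt ∘ h.1.eigenvalues) *
      (star h.1.eigenvectorUnitary : Matrix (Fin n) (Fin n) ℝ) else 0

/-- `trace √(√A·B·√A)`. -/
noncomputable def sqrtTr {n : ℕ} (A B : Matrix (Fin n) (Fin n) ℝ) : ℝ :=
  (psdSqrt (psdSqrt A * B * psdSqrt A)).trace

/-- `T` is an optimal transport matrix from `A` to `B`. -/
def IsOT {n : ℕ} (A B T : Matrix (Fin n) (Fin n) ℝ) : Prop :=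
  T * A * Tᵀ = B ∧ (A * T).trace = sqrtTr A B

/-- Squared Bures–Wasserstein distance. -/
noncomputable def W2sq {n : ℕ} (A B : Matrix (Fin n) (Fin n) ℝ) : ℝ :=
  A.trace + B.trace - 2 * sqrtTr A B

section Helpers

variable {n : ℕ}

/-- The psd square root built from the spectral decomposition. -/
noncomputable def Matrix.PosSemidef.sqrt {M : Matrix (Fin n) (Fin n) ℝ} (h : M.PosSemidef) :
    Matrix (Fin n) (Fin n) ℝ :=
  (h.1.eigenvectorUnitary : Matrix (Fin n) (Fin n) ℝ) * diagonal (Real.sqrt ∘ h.1.eigenvalues) *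
    (star h.1.eigenvectorUnitary : Matrix (Fin n) (Fin n) ℝ)

lemma Matrix.PosSemidef.posSemidef_sqrt {M : Matrix (Fin n) (Fin n) ℝ} (h : M.PosSemidef) :
    h.sqrt.PosSemidef := by
  unfold Matrix.PosSemidef.sqrt
  rw [star_eq_conjTranspose]
  exact (PosSemidef.diagonal (fun i => Real.sqrt_nonneg _)).mul_mul_conjTranspose_same _

lemma Matrix.PosSemidef.sqrt_mul_self {M : Matrix (Fin n) (Fin n) ℝ} (h : M.PosSemidef) :
    h.sqrt * h.sqrt = M := by
  unfold Matrix.PosSemidef.sqrt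
  have hUU : (star h.1.eigenvectorUnitary : Matrix (Fin n) (Fin n) ℝ) *
      (h.1.eigenvectorUnitary : Matrix (Fin n) (Fin n) ℝ) = 1 :=
    Unitary.coe_star_mul_self h.1.eigenvectorUnitary
  conv_rhs => rw [h.1.spectral_theorem, Unitary.conjStarAlgAut_apply]
  calc _ = (h.1.eigenvectorUnitary : Matrix (Fin n) (Fin n) ℝ) *
        (diagonal (Real.sqrt ∘ h.1.eigenvalues) *
        ((star h.1.eigenvectorUnitary : Matrix (Fin n) (Fin n) ℝ) *
          (h.1.eigenvectorUnitary : Matrix (Fin n) (Fin n) ℝ)) *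
        diagonal (Real.sqrt ∘ h.1.eigenvalues)) *
        (star h.1.eigenvectorUnitary : Matrix (Fin n) (Fin n) ℝ) := by simp only [mul_assoc]
    _ = _ := by
      rw [hUU, mul_one, diagonal_mul_diagonal]
      congr 2
      ext i j
      simp [diagonal_apply, Real.mul_self_sqrt (h.eigenvalues_nonneg i)]

lemma vecMulVec_mulVec' (a b x : Fin n → ℝ) : vecMulVec a b *ᵥ x = (b ⬝ᵥ x) • a := by
  ext i
  simp only [vecMulVec_apply, mulVec, dotProduct, Pi.smul_apply, smul_eq_mul, Finset.sum_mul]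
  exact Finset.sum_congr rfl fun k _ => by ring

lemma vecMulVec_isHermitian (v : Fin n → ℝ) : (vecMulVec v v).IsHermitian := by
  ext i j
  simp [vecMulVec_apply, mul_comm]

lemma posSemidef_vecMulVec (v : Fin n → ℝ) : (vecMulVec v v).PosSemidef := by
  refine PosSemidef.of_dotProduct_mulVec_nonneg (vecMulVec_isHermitian v) fun x => ?_
  rw [star_trivial, vecMulVec_mulVec', dotProduct_smul]
  have : v ⬝ᵥ x = x ⬝ᵥ v := dotProduct_comm _ _
  simp only [smul_eq_mul]
  rw [← this]
  exact mul_self_nonneg _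

lemma trace_vecMulVec (a b : Fin n → ℝ) : (vecMulVec a b).trace = a ⬝ᵥ b := by
  simp [Matrix.trace, Matrix.diag, vecMulVec_apply, dotProduct]

lemma mul_vecMulVec (M : Matrix (Fin n) (Fin n) ℝ) (a b : Fin n → ℝ) :
    M * vecMulVec a b = vecMulVec (M *ᵥ a) b := by
  ext i j
  simp [vecMulVec_apply, Matrix.mul_apply, mulVec, dotProduct, Finset.sum_mul, mul_assoc]

lemma vecMulVec_mul (M : Matrix (Fin n) (Fin n) ℝ) (a b : Fin n → ℝ) :
    vecMulVec a b * M = vecMulVec a (b ᵥ* M) := by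
  ext i j
  simp [vecMulVec_apply, Matrix.mul_apply, vecMul, dotProduct, Finset.mul_sum, mul_assoc]

lemma dot_mulVec_symm' {M : Matrix (Fin n) (Fin n) ℝ} (hM : M.IsHermitian) (a b : Fin n → ℝ) :
    a ⬝ᵥ (M *ᵥ b) = (M *ᵥ a) ⬝ᵥ b := by
  have ht : Mᵀ = M := by
    have := hM.eq
    rwa [conjTranspose_eq_transpose_of_trivial] at this
  rw [dotProduct_mulVec, ← ht, vecMul_transpose, ht]

lemma dot_self_nonneg (w : Fin n → ℝ) : 0 ≤ w ⬝ᵥ w := by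
  rw [dotProduct]
  exact Finset.sum_nonneg fun k _ => mul_self_nonneg _

lemma psd_smul {M : Matrix (Fin n) (Fin n) ℝ} (hM : M.PosSemidef) {c : ℝ} (hc : 0 ≤ c) :
    (c • M).PosSemidef := by
  refine PosSemidef.of_dotProduct_mulVec_nonneg ?_ ?_
  · ext i j
    have := congrFun (congrFun hM.1.eq i) j
    simp only [conjTranspose_apply, Matrix.smul_apply, smul_eq_mul, star_trivial] at this ⊢
    rw [this]
  · intro x
    rw [star_trivial, smul_mulVec, dotProduct_smul, smul_eq_mul]
    exact mul_nonneg hc (by simpa using hM.dotProduct_mulVec_nonneg x)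

lemma psd_diag_nonneg {M : Matrix (Fin n) (Fin n) ℝ} (hM : M.PosSemidef) (i : Fin n) :
    0 ≤ M i i := by
  have := hM.dotProduct_mulVec_nonneg (Pi.single i 1)
  simpa [dotProduct, mulVec, Pi.single_apply] using this

lemma psd_trace_nonneg {M : Matrix (Fin n) (Fin n) ℝ} (hM : M.PosSemidef) : 0 ≤ M.trace :=
  Finset.sum_nonneg fun i _ => psd_diag_nonneg hM i

lemma trace_sqrt_eq {M : Matrix (Fin n) (Fin n) ℝ} (hM : M.PosSemidef) :
    hM.sqrt.trace = ∑ i, Real.sqrt (hM.1.eigenvalues i) := by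
  rw [Matrix.PosSemidef.sqrt, trace_mul_cycle,
    Unitary.coe_star_mul_self hM.1.eigenvectorUnitary, one_mul, trace_diagonal]
  simp

/-- Key fact: if `R` is symmetric with `R² ≤ M`, then `tr R ≤ tr √M`. -/
lemma trace_le_trace_sqrt {M R : Matrix (Fin n) (Fin n) ℝ} (hM : M.PosSemidef)
    (hR : R.IsHermitian) (h : (M - R * R).PosSemidef) : R.trace ≤ hM.sqrt.trace := by
  classical
  set U : Matrix (Fin n) (Fin n) ℝ := (hM.1.eigenvectorUnitary : Matrix (Fin n) (Fin n) ℝ) with hU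
  have hUU : star U * U = 1 := Unitary.coe_star_mul_self hM.1.eigenvectorUnitary
  have hUU' : U * star U = 1 := Unitary.coe_mul_star_self hM.1.eigenvectorUnitary
  set R' : Matrix (Fin n) (Fin n) ℝ := star U * R * U with hR'
  have htr : R'.trace = R.trace := by
    rw [hR', trace_mul_cycle, hUU', one_mul]
  have hdiag : star U * M * U = diagonal (RCLike.ofReal ∘ hM.1.eigenvalues) :=
    by have h := hM.1.conjStarAlgAut_star_eigenvectorUnitary
       rwa [Unitary.conjStarAlgAut_apply, Unitary.coe_star, star_star] at h
  have hconj : (star U * (M - R * R) * U).PosSemidef := h.conjTranspose_mul_mul_same U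
  have hsplit : star U * (M - R * R) * U
      = diagonal (RCLike.ofReal ∘ hM.1.eigenvalues) - R' * R' := by
    rw [← hdiag, hR']
    have : star U * (R * R) * U = (star U * R * U) * (star U * R * U) := by
      calc star U * (R * R) * U = star U * (R * (R * U)) := by simp only [mul_assoc]
        _ = star U * (R * ((U * star U) * (R * U))) := by rw [hUU', one_mul]
        _ = (star U * R * U) * (star U * R * U) := by simp only [mul_assoc]
    rw [mul_sub, sub_mul, this]
  rw [hsplit] at hconj
  have hR'sym : R'.IsHermitian := by
    rw [hR']
    have : (star U * R * U)ᴴ = star U * Rᴴ * U := by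
      rw [conjTranspose_mul, conjTranspose_mul, star_eq_conjTranspose, conjTranspose_conjTranspose,
        mul_assoc]
    rw [Matrix.IsHermitian, this, hR.eq]
  have key : ∀ i, R' i i ≤ Real.sqrt (hM.1.eigenvalues i) := by
    intro i
    have hd := psd_diag_nonneg hconj i
    rw [Matrix.sub_apply, Matrix.diagonal_apply_eq] at hd
    simp only [Function.comp_apply, RCLike.ofReal_real_eq_id, id_eq] at hd
    have hRR : (R' i i) ^ 2 ≤ (R' * R') i i := by
      have : (R' * R') i i = ∑ k, R' i k ^ 2 := by
        rw [Matrix.mul_apply]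
        refine Finset.sum_congr rfl fun k _ => ?_
        have : R' k i = R' i k := by
          have := congrFun (congrFun hR'sym.eq i) k
          simpa [conjTranspose_apply] using this
        rw [this]; ring
      rw [this]
      exact Finset.single_le_sum (f := fun k => R' i k ^ 2) (fun k _ => sq_nonneg _)
        (Finset.mem_univ i)
    have hnn : 0 ≤ hM.1.eigenvalues i := hM.eigenvalues_nonneg i
    rcases le_or_gt (R' i i) 0 with hle | hgt
    · exact hle.trans (Real.sqrt_nonneg _)
    · rw [← Real.sqrt_sq hgt.le]
      exact Real.sqrt_le_sqrt (by nlinarith)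
  rw [← htr, trace_sqrt_eq hM, Matrix.trace]
  exact Finset.sum_le_sum fun i _ => key i

lemma psdSqrt_eq {M : Matrix (Fin n) (Fin n) ℝ} (hM : M.PosSemidef) : psdSqrt M = hM.sqrt := by
  unfold psdSqrt
  exact dif_pos hM

lemma sqrtTr_eq_trace {A B : Matrix (Fin n) (Fin n) ℝ} (hA : A.PosSemidef)
    (h : (hA.sqrt * B * hA.sqrt).PosSemidef) : sqrtTr A B = h.sqrt.trace := by
  unfold sqrtTr
  rw [psdSqrt_eq hA, psdSqrt_eq h]

lemma vecMulVec_transpose' (v : Fin n → ℝ) : (vecMulVec v v)ᵀ = vecMulVec v v := by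
  ext i j
  simp [vecMulVec_apply, mul_comm]

lemma vecMulVec_mul_self (v : Fin n → ℝ) :
    vecMulVec v v * vecMulVec v v = (v ⬝ᵥ v) • vecMulVec v v := by
  rw [vecMulVec_mul]
  ext k l
  simp only [vecMulVec_apply, Matrix.smul_apply, smul_eq_mul, vecMul, dotProduct]
  rw [Finset.mul_sum, Finset.sum_mul]
  exact Finset.sum_congr rfl fun j _ => by ring

lemma sqrt_congr {M₁ M₂ : Matrix (Fin n) (Fin n) ℝ} (h : M₁ = M₂) (h₁ : M₁.PosSemidef)
    (h₂ : M₂.PosSemidef) : h₁.sqrt = h₂.sqrt := by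
  subst h; rfl

lemma sqrt_conj_add (Sq B : Matrix (Fin n) (Fin n) ℝ) (hsym : Sqᵀ = Sq) (τ : ℝ) (x : Fin n → ℝ) :
    Sq * (B + τ • vecMulVec x x) * Sq
      = Sq * B * Sq + τ • vecMulVec (Sq *ᵥ x) (Sq *ᵥ x) := by
  rw [Matrix.mul_add, Matrix.add_mul]
  congr 1
  rw [Matrix.mul_smul, Matrix.smul_mul, mul_vecMulVec, vecMulVec_mul]
  congr 2
  rw [← mulVec_transpose, hsym]

lemma range_sup_ker {M : Matrix (Fin n) (Fin n) ℝ} (hM : M.IsHermitian) :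
    LinearMap.range M.mulVecLin ⊔ LinearMap.ker M.mulVecLin = ⊤ := by
  have hdisj : LinearMap.range M.mulVecLin ⊓ LinearMap.ker M.mulVecLin = ⊥ := by
    rw [Submodule.eq_bot_iff]
    rintro w ⟨⟨z, rfl⟩, hw⟩
    rw [SetLike.mem_coe, LinearMap.mem_ker, Matrix.mulVecLin_apply, Matrix.mulVecLin_apply] at hw
    rw [Matrix.mulVecLin_apply]
    have : (M *ᵥ z) ⬝ᵥ (M *ᵥ z) = 0 := by
      rw [← dot_mulVec_symm' hM z (M *ᵥ z), hw, dotProduct_zero]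
    exact (dotProduct_self_eq_zero).mp this
  apply Submodule.eq_top_of_finrank_eq
  have h1 := LinearMap.finrank_range_add_finrank_ker M.mulVecLin
  have h2 := Submodule.finrank_sup_add_finrank_inf_eq (LinearMap.range M.mulVecLin)
    (LinearMap.ker M.mulVecLin)
  rw [hdisj, finrank_bot, add_zero] at h2
  rw [h2, h1]

lemma rank_le_of_inf_eq_bot {X Y : Matrix (Fin n) (Fin n) ℝ}
    (h : LinearMap.range X.mulVecLin ⊓ LinearMap.ker Y.mulVecLin = ⊥) : X.rank ≤ Y.rank := by
  have hker : LinearMap.ker (Y * X).mulVecLin = LinearMap.ker X.mulVecLin := by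
    rw [Matrix.mulVecLin_mul]
    apply le_antisymm
    · intro w hw
      rw [LinearMap.mem_ker, LinearMap.comp_apply] at hw
      rw [LinearMap.mem_ker]
      have hmem : X.mulVecLin w ∈ LinearMap.range X.mulVecLin ⊓ LinearMap.ker Y.mulVecLin :=
        ⟨LinearMap.mem_range_self _ w, hw⟩
      rw [h] at hmem
      simpa using hmem
    · intro w hw
      rw [LinearMap.mem_ker] at hw
      rw [LinearMap.mem_ker, LinearMap.comp_apply, hw, map_zero]
  have h1 := LinearMap.finrank_range_add_finrank_ker (Y * X).mulVecLin
  have h2 := LinearMap.finrank_range_add_finrank_ker X.mulVecLin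
  rw [hker] at h1
  have heq : (Y * X).rank = X.rank := by
    unfold Matrix.rank
    omega
  calc X.rank = (Y * X).rank := heq.symm
    _ ≤ Y.rank := Matrix.rank_mul_le_left _ _

end Helpers

/-- If `Â` is a weighted Wasserstein barycenter of psd matrices
`A₁, …, A_m`, then `range Aᵢ ∩ ker Â = {0}` for each `i`; in particular
`rank Â ≥ max_i rank Aᵢ`. -/
theorem stmt9 {n m : ℕ} (A : Fin m → Matrix (Fin n) (Fin n) ℝ)
    (hA : ∀ i, (A i).PosSemidef)
    (p : Fin m → ℝ) (hp : ∀ i, 0 < p i) (hp1 : ∑ i, p i = 1)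
    (Ahat : Matrix (Fin n) (Fin n) ℝ) (hAhat : Ahat.PosSemidef)
    (hmin : ∀ B : Matrix (Fin n) (Fin n) ℝ, B.PosSemidef →
      ∑ i, p i * W2sq (A i) Ahat ≤ ∑ i, p i * W2sq (A i) B) :
    (∀ i, LinearMap.range (A i).mulVecLin ⊓ LinearMap.ker Ahat.mulVecLin = ⊥) ∧
      ∀ i, (A i).rank ≤ Ahat.rank := by
  classical
  have hconj : ∀ (j : Fin m) (B : Matrix (Fin n) (Fin n) ℝ), B.PosSemidef →
      ((hA j).sqrt * B * (hA j).sqrt).PosSemidef := by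
    intro j B hB
    have h := hB.mul_mul_conjTranspose_same (hA j).sqrt
    rwa [((hA j).posSemidef_sqrt).1.eq] at h
  have part1 : ∀ i, LinearMap.range (A i).mulVecLin ⊓ LinearMap.ker Ahat.mulVecLin = ⊥ := by
    intro i
    by_contra hne
    obtain ⟨x, hxmem, hx0⟩ := (Submodule.ne_bot_iff _).mp hne
    obtain ⟨⟨y, hy⟩, hxk⟩ := hxmem
    rw [Matrix.mulVecLin_apply] at hy
    rw [SetLike.mem_coe, LinearMap.mem_ker, Matrix.mulVecLin_apply] at hxk
    -- setup
    obtain ⟨S, hSdef⟩ : ∃ S : Matrix (Fin n) (Fin n) ℝ, (hA i).sqrt = S := ⟨_, rfl⟩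
    have hSpsd : S.PosSemidef := hSdef ▸ (hA i).posSemidef_sqrt
    have hSS : S * S = A i := by rw [← hSdef]; exact (hA i).sqrt_mul_self
    set v : Fin n → ℝ := S *ᵥ x with hvdef
    obtain ⟨M, hMdef⟩ : ∃ M : Matrix (Fin n) (Fin n) ℝ, S * Ahat * S = M := ⟨_, rfl⟩
    have hMpsd : M.PosSemidef := by
      rw [← hMdef, ← hSdef]
      exact hconj i Ahat hAhat
    obtain ⟨Q, hQdef⟩ : ∃ Q : Matrix (Fin n) (Fin n) ℝ, hMpsd.sqrt = Q := ⟨_, rfl⟩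
    have hQpsd : Q.PosSemidef := hQdef ▸ hMpsd.posSemidef_sqrt
    have hQQ : Q * Q = M := by rw [← hQdef]; exact hMpsd.sqrt_mul_self
    -- decompose v
    have hvmem : v ∈ LinearMap.range M.mulVecLin ⊔ LinearMap.ker M.mulVecLin := by
      rw [range_sup_ker hMpsd.1]; trivial
    obtain ⟨v₁, hv₁, v₂, hv₂, hv12⟩ := Submodule.mem_sup.mp hvmem
    obtain ⟨z, hz⟩ := hv₁
    rw [Matrix.mulVecLin_apply] at hz
    rw [LinearMap.mem_ker, Matrix.mulVecLin_apply] at hv₂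
    -- v₂ ≠ 0
    have hv₂ne : v₂ ≠ 0 := by
      intro h0
      have hveq : v = M *ᵥ z := by rw [← hv12, h0, add_zero, hz]
      have hMz : M *ᵥ z = S *ᵥ (Ahat *ᵥ (S *ᵥ z)) := by
        rw [mulVec_mulVec, mulVec_mulVec, hMdef]
      have h1 : S *ᵥ (x - Ahat *ᵥ (S *ᵥ z)) = 0 := by
        rw [Matrix.mulVec_sub, ← hMz, ← hveq, hvdef, sub_self]
      have h2 : A i *ᵥ (x - Ahat *ᵥ (S *ᵥ z)) = 0 := by
        rw [← hSS, ← mulVec_mulVec, h1, Matrix.mulVec_zero]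
      have h3 : x ⬝ᵥ (x - Ahat *ᵥ (S *ᵥ z)) = 0 := by
        have hh : (A i *ᵥ y) ⬝ᵥ (x - Ahat *ᵥ (S *ᵥ z)) = 0 := by
          rw [← dot_mulVec_symm' (hA i).1 y _, h2, dotProduct_zero]
        rwa [hy] at hh
      have h4 : x ⬝ᵥ (Ahat *ᵥ (S *ᵥ z)) = 0 := by
        rw [dot_mulVec_symm' hAhat.1 x _, hxk, zero_dotProduct]
      rw [dotProduct_sub, h4, sub_zero] at h3
      exact hx0 (dotProduct_self_eq_zero.mp h3)
    -- constants
    set q : ℝ := v₂ ⬝ᵥ v₂ with hqdef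
    have hq : 0 < q := by
      rcases lt_or_eq_of_le (dot_self_nonneg v₂) with h | h
      · exact h
      · exact absurd (dotProduct_self_eq_zero.mp h.symm) hv₂ne
    set nv : ℝ := Real.sqrt q with hnvdef
    have hnv : 0 < nv := Real.sqrt_pos.mpr hq
    have hnvsq : nv * nv = q := Real.mul_self_sqrt hq.le
    set C : ℝ := z ⬝ᵥ (M *ᵥ z) with hCdef
    have hC : 0 ≤ C := by simpa using hMpsd.dotProduct_mulVec_nonneg z
    obtain ⟨tM, htMdef⟩ : ∃ tM : ℝ, Q.trace = tM := ⟨_, rfl⟩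
    have htM : 0 ≤ tM := htMdef ▸ psd_trace_nonneg hQpsd
    set xx : ℝ := x ⬝ᵥ x with hxxdef
    have hxx : 0 < xx := by
      rcases lt_or_eq_of_le (dot_self_nonneg x) with h | h
      · exact h
      · exact absurd (dotProduct_self_eq_zero.mp h.symm) hx0
    set d : ℝ := xx + 2 * p i * (C * tM) with hddef
    have hd : 0 < d := by
      have := mul_nonneg (mul_nonneg (by norm_num : (0:ℝ) ≤ 2) (hp i).le)
        (mul_nonneg hC htM)
      nlinarith
    -- choice of τ
    set τ : ℝ := min (1 / (C + 1)) (2 * (p i * nv / (2 * d)) ^ 2) with hτdef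
    have hCpos : 0 < C + 1 := by linarith
    have hτpos : 0 < τ := by
      apply lt_min
      · exact div_pos one_pos hCpos
      · have h0 : 0 < p i * nv / (2 * d) := div_pos (mul_pos (hp i) hnv) (by linarith)
        positivity
    have hτC : τ * C ≤ 1 := by
      have h1 : τ ≤ 1 / (C + 1) := min_le_left _ _
      have h3 : τ * (C + 1) ≤ 1 := by
        rw [← le_div_iff₀ hCpos] at *
        exact h1
      nlinarith
    -- perturbed matrix
    set Bm : Matrix (Fin n) (Fin n) ℝ := Ahat + τ • vecMulVec x x with hBmdef
    have hBpsd : Bm.PosSemidef := hAhat.add (psd_smul (posSemidef_vecMulVec x) hτpos.le)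
    have hBtr : Bm.trace = Ahat.trace + τ * xx := by
      rw [hBmdef, trace_add, Matrix.trace_smul, trace_vecMulVec, smul_eq_mul]
    -- conjugated perturbation identity
    have hGj : ∀ j : Fin m, (hA j).sqrt * Bm * (hA j).sqrt
        = ((hA j).sqrt * Ahat * (hA j).sqrt)
          + τ • vecMulVec ((hA j).sqrt *ᵥ x) ((hA j).sqrt *ᵥ x) := by
      intro j
      have hsym : ((hA j).sqrt)ᵀ = (hA j).sqrt := by
        have := ((hA j).posSemidef_sqrt).1.eq
        rwa [conjTranspose_eq_transpose_of_trivial] at this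
      rw [hBmdef]
      exact sqrt_conj_add _ _ hsym τ x
    -- monotonicity for every j
    have hmono : ∀ j : Fin m, sqrtTr (A j) Ahat ≤ sqrtTr (A j) Bm := by
      intro j
      rw [sqrtTr_eq_trace (hA j) (hconj j Ahat hAhat), sqrtTr_eq_trace (hA j) (hconj j Bm hBpsd)]
      apply trace_le_trace_sqrt (hconj j Bm hBpsd) ((hconj j Ahat hAhat).posSemidef_sqrt).1
      rw [(hconj j Ahat hAhat).sqrt_mul_self, hGj j, add_sub_cancel_left]
      exact psd_smul (posSemidef_vecMulVec _) hτpos.le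
    -- the gain at index i
    have hQv₂ : Q *ᵥ v₂ = 0 := by
      have h2 : (Q *ᵥ v₂) ⬝ᵥ (Q *ᵥ v₂) = 0 := by
        rw [← dot_mulVec_symm' hQpsd.1 v₂ (Q *ᵥ v₂), mulVec_mulVec, hQQ, hv₂, dotProduct_zero]
      exact dotProduct_self_eq_zero.mp h2
    have hv₂Q : v₂ ᵥ* Q = 0 := by
      have hsym : Qᵀ = Q := by
        have := hQpsd.1.eq
        rwa [conjTranspose_eq_transpose_of_trivial] at this
      rw [← hsym, vecMul_transpose, hQv₂]
    set a : ℝ := Real.sqrt (1 - τ * C) with hadef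
    have ha0 : 0 ≤ a := Real.sqrt_nonneg _
    have hasq : a * a = 1 - τ * C := Real.mul_self_sqrt (by linarith)
    have haa : a ≤ 1 := by nlinarith [mul_nonneg hτpos.le hC]
    have ha1 : 1 - τ * C ≤ a := by nlinarith [mul_nonneg ha0 (sub_nonneg.mpr haa)]
    set b : ℝ := Real.sqrt (τ / 2) / nv with hbdef
    have hb0 : 0 ≤ b := div_nonneg (Real.sqrt_nonneg _) hnv.le
    have hbsq : b * b * q = τ / 2 := by
      rw [hbdef, div_mul_div_comm, Real.mul_self_sqrt (by positivity), hnvsq]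
      field_simp
    set W₂ : Matrix (Fin n) (Fin n) ℝ := vecMulVec v₂ v₂ with hW₂def
    set R : Matrix (Fin n) (Fin n) ℝ := a • Q + b • W₂ with hRdef
    have hQsymT : Qᵀ = Q := by
      have := hQpsd.1.eq
      rwa [conjTranspose_eq_transpose_of_trivial] at this
    have hMsymT : Mᵀ = M := by
      have := hMpsd.1.eq
      rwa [conjTranspose_eq_transpose_of_trivial] at this
    have hRsym : R.IsHermitian := by
      rw [Matrix.IsHermitian, conjTranspose_eq_transpose_of_trivial, hRdef, transpose_add,
        transpose_smul, transpose_smul, hQsymT, hW₂def, vecMulVec_transpose']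
    have hQW : Q * W₂ = 0 := by
      rw [hW₂def, _root_.mul_vecMulVec, hQv₂]
      ext k l
      simp [vecMulVec_apply]
    have hWQ : W₂ * Q = 0 := by
      rw [hW₂def, _root_.vecMulVec_mul, hv₂Q]
      ext k l
      simp [vecMulVec_apply]
    have hWW : W₂ * W₂ = q • W₂ := by
      rw [hW₂def, hqdef]
      exact vecMulVec_mul_self v₂
    have hRR : R * R = (1 - τ * C) • M + (τ / 2) • W₂ := by
      rw [hRdef, Matrix.add_mul, Matrix.mul_add, Matrix.mul_add]
      rw [Matrix.smul_mul, Matrix.smul_mul, Matrix.smul_mul, Matrix.smul_mul,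
        Matrix.mul_smul, Matrix.mul_smul, Matrix.mul_smul, Matrix.mul_smul]
      rw [hQQ, hQW, hWQ, hWW]
      simp only [smul_zero, add_zero, zero_add, smul_smul]
      rw [hasq, show b * (b * q) = τ / 2 from by rw [← hbsq]; ring]
    -- G_i - R * R is psd
    set G : Matrix (Fin n) (Fin n) ℝ := S * Bm * S with hGdef
    have hGeq : G = M + τ • vecMulVec v v := by
      rw [hGdef, ← hSdef, hGj i, hSdef, hMdef, ← hvdef]
    have hdiff : (G - R * R).PosSemidef := by
      rw [hGeq, hRR]
      have hmat : M + τ • vecMulVec v v - ((1 - τ * C) • M + (τ / 2) • W₂)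
          = (τ * C) • M + τ • vecMulVec v v - (τ / 2) • W₂ := by
        module
      rw [hmat]
      refine PosSemidef.of_dotProduct_mulVec_nonneg ?_ ?_
      · rw [Matrix.IsHermitian, conjTranspose_eq_transpose_of_trivial, transpose_sub,
          transpose_add, transpose_smul, transpose_smul, transpose_smul, hMsymT,
          vecMulVec_transpose', hW₂def, vecMulVec_transpose']
      · intro y
        rw [star_trivial, Matrix.sub_mulVec, Matrix.add_mulVec, smul_mulVec,
          smul_mulVec, smul_mulVec, vecMulVec_mulVec', hW₂def, vecMulVec_mulVec',
          dotProduct_sub, dotProduct_add, dotProduct_smul, dotProduct_smul, dotProduct_smul,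
          dotProduct_smul, dotProduct_smul]
        have hmy : 0 ≤ y ⬝ᵥ (M *ᵥ y) := by simpa using hMpsd.dotProduct_mulVec_nonneg y
        have hvy : v ⬝ᵥ y = v₁ ⬝ᵥ y + v₂ ⬝ᵥ y := by
          rw [← hv12, add_dotProduct]
        have hcs : (v₁ ⬝ᵥ y) ^ 2 ≤ C * (y ⬝ᵥ (M *ᵥ y)) := by
          have hv₁y : v₁ ⬝ᵥ y = (Q *ᵥ z) ⬝ᵥ (Q *ᵥ y) := by
            rw [← hz, ← hQQ, ← mulVec_mulVec, dot_mulVec_symm' hQpsd.1 (Q *ᵥ z) y]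
          have hCz : C = (Q *ᵥ z) ⬝ᵥ (Q *ᵥ z) := by
            rw [hCdef, ← hQQ, ← mulVec_mulVec, dot_mulVec_symm' hQpsd.1 z (Q *ᵥ z)]
          have hMy : y ⬝ᵥ (M *ᵥ y) = (Q *ᵥ y) ⬝ᵥ (Q *ᵥ y) := by
            rw [← hQQ, ← mulVec_mulVec, dot_mulVec_symm' hQpsd.1 y (Q *ᵥ y)]
          rw [hv₁y, hCz, hMy]
          have := Finset.sum_mul_sq_le_sq_mul_sq Finset.univ (fun k => (Q *ᵥ z) k)
            (fun k => (Q *ᵥ y) k)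
          simpa [dotProduct, sq] using this
        have hdot2 : y ⬝ᵥ v₂ = v₂ ⬝ᵥ y := dotProduct_comm _ _
        have hdot1 : y ⬝ᵥ v = v ⬝ᵥ y := dotProduct_comm _ _
        rw [hdot2, hdot1, hvy]
        simp only [smul_eq_mul]
        set α : ℝ := v₁ ⬝ᵥ y with hα
        set β : ℝ := v₂ ⬝ᵥ y with hβ
        nlinarith [sq_nonneg (α + β / 2), mul_nonneg hτpos.le hmy, hcs,
          mul_nonneg hτpos.le (mul_nonneg hC hmy), sq_nonneg (α + β),
          mul_le_mul_of_nonneg_left hcs hτpos.le]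
    -- trace bound
    have htrR : R.trace = a * tM + Real.sqrt (τ / 2) * nv := by
      rw [hRdef, trace_add, Matrix.trace_smul, Matrix.trace_smul, hW₂def, _root_.trace_vecMulVec, ← hqdef,
        smul_eq_mul, smul_eq_mul, htMdef, hbdef]
      congr 1
      rw [div_mul_eq_mul_div, ← hnvsq]
      field_simp
    have hgain : tM + (Real.sqrt (τ / 2) * nv - τ * (C * tM)) ≤ sqrtTr (A i) Bm := by
      rw [sqrtTr_eq_trace (hA i) (hconj i Bm hBpsd)]
      have hdiff' : ((hA i).sqrt * Bm * (hA i).sqrt - R * R).PosSemidef := by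
        rw [hSdef, ← hGdef]
        exact hdiff
      have h1 := trace_le_trace_sqrt (hconj i Bm hBpsd) hRsym hdiff'
      rw [htrR] at h1
      have h2 : tM + (Real.sqrt (τ / 2) * nv - τ * (C * tM)) ≤ a * tM + Real.sqrt (τ / 2) * nv := by
        nlinarith [mul_le_mul_of_nonneg_right ha1 htM]
      linarith
    have hsti : sqrtTr (A i) Ahat = tM := by
      rw [sqrtTr_eq_trace (hA i) (hconj i Ahat hAhat)]
      have heq : (hconj i Ahat hAhat).sqrt = hMpsd.sqrt :=
        sqrt_congr (by rw [hSdef, hMdef]) _ _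
      rw [heq, hQdef, htMdef]
    -- assemble the sum inequality
    set gain : ℝ := Real.sqrt (τ / 2) * nv - τ * (C * tM) with hgaindef
    have hperj : ∀ j : Fin m, p j * W2sq (A j) Bm
        ≤ p j * (W2sq (A j) Ahat + τ * xx) - (if j = i then 2 * p i * gain else 0) := by
      intro j
      by_cases hji : j = i
      · subst hji
        rw [if_pos rfl]
        have : W2sq (A j) Bm ≤ W2sq (A j) Ahat + τ * xx - 2 * gain := by
          unfold W2sq
          rw [hBtr]
          have := hgain
          rw [← hsti] at this
          linarith
        nlinarith [hp j, this]
      · rw [if_neg hji, sub_zero]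
        have : W2sq (A j) Bm ≤ W2sq (A j) Ahat + τ * xx := by
          unfold W2sq
          rw [hBtr]
          have := hmono j
          linarith
        nlinarith [hp j, this]
    have hsum1 : ∑ j, p j * W2sq (A j) Bm
        ≤ (∑ j, p j * W2sq (A j) Ahat) + τ * xx - 2 * p i * gain := by
      calc ∑ j, p j * W2sq (A j) Bm
          ≤ ∑ j, (p j * (W2sq (A j) Ahat + τ * xx) - (if j = i then 2 * p i * gain else 0)) :=
            Finset.sum_le_sum fun j _ => hperj j
        _ = (∑ j, p j * W2sq (A j) Ahat) + τ * xx - 2 * p i * gain := by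
            rw [Finset.sum_sub_distrib]
            rw [Finset.sum_ite_eq' Finset.univ i (fun _ => 2 * p i * gain)]
            rw [if_pos (Finset.mem_univ i)]
            congr 1
            have : ∀ j : Fin m, p j * (W2sq (A j) Ahat + τ * xx)
                = p j * W2sq (A j) Ahat + (τ * xx) * p j := by intro j; ring
            rw [Finset.sum_congr rfl fun j _ => this j, Finset.sum_add_distrib, ← Finset.mul_sum,
              hp1, mul_one]
    have hfinal : 2 * p i * gain ≤ τ * xx := by
      have := hmin Bm hBpsd
      linarith
    -- numeric contradiction
    have hst : Real.sqrt (τ / 2) ≤ p i * nv / (2 * d) := by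
      have hτle : τ ≤ 2 * (p i * nv / (2 * d)) ^ 2 := min_le_right _ _
      have : τ / 2 ≤ (p i * nv / (2 * d)) ^ 2 := by linarith
      calc Real.sqrt (τ / 2) ≤ Real.sqrt ((p i * nv / (2 * d)) ^ 2) := Real.sqrt_le_sqrt this
        _ = p i * nv / (2 * d) := Real.sqrt_sq
              (div_nonneg (mul_nonneg (hp i).le hnv.le) (by linarith))
    have hstpos : 0 < Real.sqrt (τ / 2) := Real.sqrt_pos.mpr (by linarith)
    set st : ℝ := Real.sqrt (τ / 2) with hstdef
    have hst2 : st * st = τ / 2 := Real.mul_self_sqrt (by linarith)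
    -- 2 p i (st nv - τ C tM) ≤ τ xx  with τ = 2 st², gives p i nv ≤ st d
    have hineq : p i * nv ≤ st * d := by
      rw [hgaindef] at hfinal
      have hτeq : τ = 2 * (st * st) := by rw [hst2]; ring
      have h2 : 2 * p i * (st * nv) ≤ τ * xx + 2 * p i * (τ * (C * tM)) := by linarith
      rw [hτeq] at h2
      have h3 : 2 * st * (p i * nv) ≤ 2 * st * (st * d) := by
        rw [hddef]; nlinarith
      have h4 : 0 < 2 * st := by linarith
      exact le_of_mul_le_mul_left (by linarith [h3]) h4
    have hcontra : st * d ≤ p i * nv / 2 := by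
      have := mul_le_mul_of_nonneg_right hst hd.le
      calc st * d ≤ (p i * nv / (2 * d)) * d := this
        _ = p i * nv / 2 := by field_simp
    have : p i * nv ≤ p i * nv / 2 := le_trans hineq hcontra
    have hpnv : 0 < p i * nv := mul_pos (hp i) hnv
    linarith
  refine ⟨part1, fun i => rank_le_of_inf_eq_bot (part1 i)⟩
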